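/- Let F = {p_0, ..., p_n} ⊂ ℝ^d (n ≥ d) and define S_i(x) = λ_i x + (1−λ_i) p_i with λ_i ∈ (0,1). If for every subset A ⊆ {0,...,n} of cardinality d+1 one has Σ_{i∈A} λ_i ≥ d, then the attractor X of the IFS {S_i}_{i=0}^n equals conv(F), the convex hull of F. -/

import Mathlib

open Finset Metric Set

/-- Contraction lemma: if a nonempty bounded set `A` is covered by the images `S_i(A)`,
and a closed nonempty set `C` is mapped into itself by each `S_i`, then `A ⊆ C`. -/
lemma attractor_aux_subset {E : Type*} [NormedAddCommGroup E] [NormedSpace ℝ E]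
    {ι : Type*} [Fintype ι] [Nonempty ι]
    (lam : ι → ℝ) (q : ι → E) (hlam : ∀ i, lam i ∈ Set.Ioo (0 : ℝ) 1)
    (A C : Set E) (hAne : A.Nonempty) (hAb : Bornology.IsBounded A)
    (hC : IsClosed C) (hCne : C.Nonempty)
    (hsub : A ⊆ ⋃ i, (fun x => lam i • x + (1 - lam i) • q i) '' A)
    (hmap : ∀ i, (fun x => lam i • x + (1 - lam i) • q i) '' C ⊆ C) : A ⊆ C := by
  classical
  obtain ⟨Λ, -, hΛmax⟩ := Finset.exists_max_image Finset.univ lam ⟨Classical.arbitrary ι,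
    Finset.mem_univ _⟩
  set L : ℝ := lam Λ with hL
  have hLle : ∀ i, lam i ≤ L := fun i => hΛmax i (Finset.mem_univ i)
  have hL0 : 0 < L := (hlam Λ).1
  have hL1 : L < 1 := (hlam Λ).2
  -- the distance contracts under each map
  have hdist : ∀ i (y c : E), dist (lam i • y + (1 - lam i) • q i)
      (lam i • c + (1 - lam i) • q i) = lam i * dist y c := by
    intro i y c
    rw [dist_eq_norm, dist_eq_norm]
    have : (lam i • y + (1 - lam i) • q i) - (lam i • c + (1 - lam i) • q i)
        = lam i • (y - c) := by
      rw [smul_sub]; abel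
    rw [this, norm_smul, Real.norm_eq_abs, abs_of_pos (hlam i).1]
  set S : Set ℝ := (fun x => infDist x C) '' A with hS
  obtain ⟨c₀, hc₀⟩ := id hCne
  obtain ⟨R, hR⟩ := hAb.subset_closedBall c₀
  have hbdd : BddAbove S := by
    refine ⟨R, fun s hs => ?_⟩
    obtain ⟨x, hxA, rfl⟩ := hs
    exact le_trans (infDist_le_dist_of_mem hc₀) (by simpa using hR hxA)
  have hSne : S.Nonempty := hAne.image _
  set D : ℝ := sSup S with hD
  have hDge : ∀ x ∈ A, infDist x C ≤ D := fun x hx => le_csSup hbdd ⟨x, hx, rfl⟩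
  have hD0 : 0 ≤ D := by
    obtain ⟨x, hx⟩ := hAne
    exact le_trans infDist_nonneg (hDge x hx)
  -- key inequality
  have hkey : ∀ ε : ℝ, 0 < ε → D ≤ L * (D + ε) := by
    intro ε hε
    refine Real.sSup_le (fun s hs => ?_) (by positivity)
    obtain ⟨x, hxA, rfl⟩ := hs
    obtain ⟨i, y, hyA, hxy⟩ := by simpa only [Set.mem_iUnion, Set.mem_image] using hsub hxA
    obtain ⟨c, hcC, hyc⟩ := (infDist_lt_iff hCne).1
      (lt_add_of_pos_right (infDist y C) hε)
    have hmem : (lam i • c + (1 - lam i) • q i) ∈ C := hmap i ⟨c, hcC, rfl⟩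
    calc infDist x C ≤ dist x (lam i • c + (1 - lam i) • q i) := infDist_le_dist_of_mem hmem
      _ = lam i * dist y c := by rw [← hxy]; exact hdist i y c
      _ ≤ L * (D + ε) := by
          apply mul_le_mul (hLle i) _ dist_nonneg hL0.le
          have := hDge y hyA
          linarith
  have hDL : D ≤ L * D := by
    refine le_of_forall_pos_le_add fun ε hε => ?_
    have h1 := hkey ε hε
    nlinarith
  have hDzero : D ≤ 0 := by nlinarith
  intro x hx
  have h1 : infDist x C ≤ 0 := le_trans (hDge x hx) hDzero
  have h2 : infDist x C = 0 := le_antisymm h1 infDist_nonneg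
  exact (hC.mem_iff_infDist_zero hCne).2 h2

/-- The key combinatorial lemma: under the weight condition, the convex hull is covered
by its images. -/
lemma convexHull_subset_iUnion (d n : ℕ) (hdn : d ≤ n)
    (p : Fin (n + 1) → EuclideanSpace ℝ (Fin d))
    (lam : Fin (n + 1) → ℝ) (hlam : ∀ i, lam i ∈ Set.Ioo (0 : ℝ) 1)
    (hsum : ∀ A : Finset (Fin (n + 1)), A.card = d + 1 → (d : ℝ) ≤ ∑ i ∈ A, lam i) :
    convexHull ℝ (Set.range p) ⊆
      ⋃ i, (fun x => lam i • x + (1 - lam i) • p i) '' convexHull ℝ (Set.range p) := by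
  classical
  intro x hx
  rw [convexHull_eq_union] at hx
  simp only [Set.mem_iUnion, exists_prop] at hx
  obtain ⟨t, hts, hai, hxt⟩ := hx
  have hcard : t.card ≤ d + 1 := by
    have h := hai.card_le_finrank_succ
    rw [Fintype.card_coe] at h
    have h2 : Module.finrank ℝ (vectorSpan ℝ (Set.range ((↑) : t → EuclideanSpace ℝ (Fin d))))
        ≤ d :=
      le_trans (Submodule.finrank_le _) (le_of_eq finrank_euclideanSpace_fin)
    omega
  rw [Finset.convexHull_eq] at hxt
  obtain ⟨w, hw0, hw1, hwx⟩ := hxt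
  rw [Finset.centerMass_eq_of_sum_1 _ _ hw1] at hwx
  simp only [id_eq] at hwx
  -- choose a section f of p on t
  set f : EuclideanSpace ℝ (Fin d) → Fin (n + 1) :=
    fun y => if h : ∃ j, p j = y then h.choose else 0 with hfdef
  have hpf : ∀ y ∈ t, p (f y) = y := by
    intro y hy
    have h : ∃ j, p j = y := hts hy
    simp only [hfdef, dif_pos h]
    exact h.choose_spec
  have hinj : Set.InjOn f ↑t := fun y hy y' hy' h => by
    rw [← hpf y hy, ← hpf y' hy', h]
  set A₀ := t.image f with hA₀def
  have hA₀card : A₀.card = t.card := Finset.card_image_of_injOn hinj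
  obtain ⟨A, hA₀A, -, hAcard⟩ := Finset.exists_subsuperset_card_eq (n := d + 1) (A₀.subset_univ)
    (by omega) (by rw [Finset.card_univ, Fintype.card_fin]; omega)
  have hpA₀ : ∀ j ∈ A₀, p j ∈ t ∧ f (p j) = j := by
    intro j hj
    obtain ⟨y, hy, rfl⟩ := Finset.mem_image.1 hj
    rw [hpf y hy]; exact ⟨hy, rfl⟩
  set μ : Fin (n + 1) → ℝ := fun j => if j ∈ A₀ then w (p j) else 0 with hμdef
  have hμ0 : ∀ j, 0 ≤ μ j := by
    intro j
    by_cases h : j ∈ A₀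
    · simp only [hμdef, if_pos h]
      exact hw0 _ (hpA₀ j h).1
    · simp [hμdef, if_neg h]
  -- sums over A reduce to sums over t
  have hred : ∀ {M : Type} [AddCommMonoid M] (g : Fin (n + 1) → EuclideanSpace ℝ (Fin d) → M),
      ∑ j ∈ A, (if j ∈ A₀ then g j (p j) else 0) = ∑ y ∈ t, g (f y) y := by
    intro M _ g
    rw [Finset.sum_ite_mem, Finset.inter_eq_right.2 hA₀A, hA₀def,
      Finset.sum_image (fun y hy y' hy' h => hinj hy hy' h)]
    refine Finset.sum_congr rfl fun y hy => ?_
    rw [hpf y hy]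
  have hμsum : ∑ j ∈ A, μ j = 1 := by
    have := hred (M := ℝ) (fun j y => w y)
    simpa only [hμdef, hw1] using this
  have hμx : ∑ j ∈ A, μ j • p j = x := by
    have h1 : ∑ j ∈ A, μ j • p j
        = ∑ j ∈ A, (if j ∈ A₀ then w (p j) • p j else 0) := by
      refine Finset.sum_congr rfl fun j hj => ?_
      by_cases h : j ∈ A₀ <;> simp [hμdef, h]
    rw [h1, hred (fun j y => w y • y), hwx]
  -- find the index i with μ i ≥ 1 - lam i
  have hA_ne : A.Nonempty := Finset.card_pos.1 (by omega)
  have hi : ∃ i ∈ A, 1 - lam i ≤ μ i := by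
    by_contra hcon
    push_neg at hcon
    have h1 : ∑ j ∈ A, μ j < ∑ j ∈ A, (1 - lam j) :=
      Finset.sum_lt_sum_of_nonempty hA_ne hcon
    have h2 : ∑ j ∈ A, (1 - lam j) = (A.card : ℝ) - ∑ j ∈ A, lam j := by
      rw [Finset.sum_sub_distrib, Finset.sum_const, nsmul_eq_mul, mul_one]
    have h3 := hsum A hAcard
    rw [hμsum, h2, hAcard] at h1
    push_cast at h1
    linarith
  obtain ⟨i, hiA, hile⟩ := hi
  have hli0 : 0 < lam i := (hlam i).1
  have hline : lam i ≠ 0 := ne_of_gt hli0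
  set ν : Fin (n + 1) → ℝ :=
    fun j => (μ j - if j = i then 1 - lam i else 0) / lam i with hνdef
  have hν0 : ∀ j ∈ A, 0 ≤ ν j := by
    intro j hj
    apply div_nonneg _ hli0.le
    by_cases h : j = i
    · rw [if_pos h, h]; linarith
    · rw [if_neg h, sub_zero]; exact hμ0 j
  have hite : ∑ j ∈ A, (if j = i then 1 - lam i else 0) = 1 - lam i := by
    rw [Finset.sum_ite_eq' A i (fun _ => 1 - lam i), if_pos hiA]
  have hν1 : ∑ j ∈ A, ν j = 1 := by
    rw [hνdef]
    rw [← Finset.sum_div, Finset.sum_sub_distrib, hμsum, hite]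
    field_simp
    ring
  set y : EuclideanSpace ℝ (Fin d) := ∑ j ∈ A, ν j • p j with hydef
  have hymem : y ∈ convexHull ℝ (Set.range p) := by
    have := A.centerMass_mem_convexHull hν0 (by rw [hν1]; norm_num)
      (fun j _ => Set.mem_range_self j (f := p))
    rwa [Finset.centerMass_eq_of_sum_1 _ _ hν1] at this
  refine Set.mem_iUnion.2 ⟨i, y, hymem, ?_⟩
  have h1 : lam i • y = ∑ j ∈ A, (μ j - if j = i then 1 - lam i else 0) • p j := by
    rw [hydef, Finset.smul_sum]
    refine Finset.sum_congr rfl fun j hj => ?_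
    rw [smul_smul]
    congr 1
    rw [hνdef]
    field_simp
  have h2 : ∑ j ∈ A, (μ j - if j = i then 1 - lam i else 0) • p j
      = x - (1 - lam i) • p i := by
    have h3 : ∀ j ∈ A, (μ j - if j = i then 1 - lam i else 0) • p j
        = μ j • p j - (if j = i then (1 - lam i) • p j else 0) := by
      intro j hj
      rw [sub_smul]
      congr 1
      by_cases h : j = i <;> simp [h]
    rw [Finset.sum_congr rfl h3, Finset.sum_sub_distrib, hμx,
      Finset.sum_ite_eq' A i (fun j => (1 - lam i) • p j), if_pos hiA]
  show lam i • y + (1 - lam i) • p i = x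
  rw [h1, h2]
  abel

/-- for `F = {p_0,…,p_n} ⊂ ℝ^d` not contained in any `(d-1)`-dimensional affine
subspace (i.e. affinely spanning) and `S_i(x) = λ_i x + (1-λ_i) p_i` with `λ_i ∈ (0,1)`:
if `Σ_{i∈A} λ_i ≥ d` for every `A ⊆ {0,…,n}` of cardinality `d+1`, then the attractor `X`
of the IFS equals `conv(F)`. -/
theorem attractor_eq_convexHull (d n : ℕ) (hd : 1 ≤ d) (hdn : d ≤ n)
    (p : Fin (n + 1) → EuclideanSpace ℝ (Fin d))
    (hspan : affineSpan ℝ (Set.range p) = ⊤)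
    (lam : Fin (n + 1) → ℝ) (hlam : ∀ i, lam i ∈ Set.Ioo (0 : ℝ) 1)
    (hsum : ∀ A : Finset (Fin (n + 1)), A.card = d + 1 → (d : ℝ) ≤ ∑ i ∈ A, lam i)
    (X : Set (EuclideanSpace ℝ (Fin d))) (hX : X.Nonempty) (hXc : IsCompact X)
    (hfix : X = ⋃ i, (fun x => lam i • x + (1 - lam i) • p i) '' X) :
    X = convexHull ℝ (Set.range p) := by
  have hfin : (Set.range p).Finite := Set.finite_range p
  have hconvc : IsCompact (convexHull ℝ (Set.range p)) := hfin.isCompact_convexHull (𝕜 := ℝ)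
  have hconvne : (convexHull ℝ (Set.range p)).Nonempty :=
    ⟨p 0, subset_convexHull ℝ _ (Set.mem_range_self 0)⟩
  apply Set.Subset.antisymm
  · -- X ⊆ conv F
    refine attractor_aux_subset lam p hlam X (convexHull ℝ (Set.range p)) hX
      hXc.isBounded hconvc.isClosed hconvne (hfix.le) ?_
    intro i z hz
    obtain ⟨c, hc, rfl⟩ := hz
    exact (convex_convexHull ℝ _) hc (subset_convexHull ℝ _ (Set.mem_range_self i))
      (hlam i).1.le (by linarith [(hlam i).2]) (by ring)
  · -- conv F ⊆ X
    refine attractor_aux_subset lam p hlam (convexHull ℝ (Set.range p)) X hconvne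
      hconvc.isBounded hXc.isClosed hX
      (convexHull_subset_iUnion d n hdn p lam hlam hsum) ?_
    intro i z hz
    rw [hfix]
    exact Set.mem_iUnion.2 ⟨i, hz⟩
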